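/- Let (X_k)_{k>0} be a sequence of nonempty finite metric spaces, and let d and d' be two metrics on the disjoint union X = ⊔_k X_k, both restricting to the given metric on each X_k, and both satisfying d(X_k, X_ℓ) ≥ diam(X_k) + diam(X_ℓ) and d'(X_k, X_ℓ) ≥ diam(X_k) + diam(X_ℓ) for all k ≠ ℓ. Assume moreover diam(X_k) → ∞. Then the identity map (X, d) → (X, d') is a coarse equivalence: there exist functions ρ₋, ρ₊ : ℝ₊ → ℝ₊ with ρ₋(t) → ∞ such that ρ₋(d(x,y)) ≤ d'(x,y) ≤ ρ₊(d(x,y)) for all x, y ∈ X. -/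
import Mathlib


open Filter

/-- Any two coarse disjoint union metrics on the disjoint union of a sequence
of nonempty finite metric spaces with diameters tending to infinity are
coarsely equivalent via the identity map. -/
theorem stmt_9 {X : ℕ → Type*} [∀ k, MetricSpace (X k)] [∀ k, Fintype (X k)]
    [∀ k, Nonempty (X k)]
    (D D' : (Σ k, X k) → (Σ k, X k) → ℝ)
    (hsymmD : ∀ p q, D p q = D q p) (hzeroD : ∀ p, D p p = 0)
    (htriD : ∀ p q r, D p r ≤ D p q + D q r)
    (hsymmD' : ∀ p q, D' p q = D' q p) (hzeroD' : ∀ p, D' p p = 0)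
    (htriD' : ∀ p q r, D' p r ≤ D' p q + D' q r)
    (hres : ∀ (k : ℕ) (x y : X k), D ⟨k, x⟩ ⟨k, y⟩ = dist x y)
    (hres' : ∀ (k : ℕ) (x y : X k), D' ⟨k, x⟩ ⟨k, y⟩ = dist x y)
    (hsep : ∀ (k l : ℕ), k ≠ l → ∀ (x : X k) (y : X l),
      Metric.diam (Set.univ : Set (X k)) + Metric.diam (Set.univ : Set (X l))
        ≤ D ⟨k, x⟩ ⟨l, y⟩)
    (hsep' : ∀ (k l : ℕ), k ≠ l → ∀ (x : X k) (y : X l),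
      Metric.diam (Set.univ : Set (X k)) + Metric.diam (Set.univ : Set (X l))
        ≤ D' ⟨k, x⟩ ⟨l, y⟩)
    (hdiam : Tendsto (fun k => Metric.diam (Set.univ : Set (X k))) atTop atTop) :
    ∃ ρm ρp : ℝ → ℝ, Tendsto ρm atTop atTop ∧
      ∀ p q, ρm (D p q) ≤ D' p q ∧ D' p q ≤ ρp (D p q) := by
  classical
  have hD0 : ∀ p q, 0 ≤ D p q := by
    intro p q
    have h := htriD p q p
    rw [hzeroD, hsymmD q p] at h
    linarith
  have hD'0 : ∀ p q, 0 ≤ D' p q := by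
    intro p q
    have h := htriD' p q p
    rw [hzeroD', hsymmD' q p] at h
    linarith
  have hdnn : ∀ k, (0:ℝ) ≤ Metric.diam (Set.univ : Set (X k)) :=
    fun k => Metric.diam_nonneg
  have hN : ∀ n : ℕ, ∃ N : ℕ, ∀ k ≥ N,
      (n : ℝ) + 1 ≤ Metric.diam (Set.univ : Set (X k)) := by
    intro n
    exact eventually_atTop.mp (hdiam.eventually (eventually_ge_atTop ((n:ℝ)+1)))
  choose N hNs using hN
  set A : ℕ → Finset (Σ k, X k) :=
    fun n => (Finset.range (N n)).sigma (fun k => (Finset.univ : Finset (X k))) with hA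
  have hkmem : ∀ (n k : ℕ), Metric.diam (Set.univ : Set (X k)) ≤ (n:ℝ) →
      ∀ x : X k, (⟨k, x⟩ : Σ k, X k) ∈ A n := by
    intro n k hk x
    have hkN : k < N n := by
      by_contra h
      push_neg at h
      have := hNs n k h
      linarith
    exact Finset.mem_sigma.2 ⟨Finset.mem_range.2 hkN, Finset.mem_univ _⟩
  set Msup : ℕ → ℕ :=
    fun n => ((A n) ×ˢ (A n)).sup (fun pq => ⌈D' pq.1 pq.2⌉₊) with hM
  set Bsup : ℕ → ℕ :=
    fun n => ((A n) ×ˢ (A n)).sup (fun pq => ⌈D pq.1 pq.2⌉₊) with hB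
  refine ⟨fun t => sInf (insert t {d | ∃ p q, t ≤ D p q ∧ d = D' p q}),
        fun t => max t ((Msup ⌈t⌉₊ : ℕ) : ℝ), ?_, ?_⟩
  · -- Tendsto
    rw [tendsto_atTop]
    intro b
    rw [eventually_atTop]
    refine ⟨max b ((Bsup ⌈b⌉₊ : ℕ) : ℝ) + 1, ?_⟩
    intro t ht
    apply le_csInf ⟨t, Set.mem_insert _ _⟩
    intro x hx
    rw [Set.mem_insert_iff] at hx
    rcases hx with rfl | ⟨p, q, hpq, rfl⟩
    · have : b ≤ max b ((Bsup ⌈b⌉₊ : ℕ) : ℝ) := le_max_left _ _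
      linarith
    · by_contra hlt
      push_neg at hlt
      obtain ⟨k, x⟩ := p
      obtain ⟨l, y⟩ := q
      rcases eq_or_ne k l with rfl | hkl
      · have heq : D ⟨k, x⟩ ⟨k, y⟩ = D' ⟨k, x⟩ ⟨k, y⟩ := by
          rw [hres, hres']
        have h1 : b ≤ max b ((Bsup ⌈b⌉₊ : ℕ) : ℝ) := le_max_left _ _
        linarith
      · have hs := hsep' k l hkl x y
        have hbn : b ≤ ((⌈b⌉₊ : ℕ) : ℝ) := Nat.le_ceil b
        have hkle : Metric.diam (Set.univ : Set (X k)) ≤ ((⌈b⌉₊ : ℕ) : ℝ) := by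
          have := hdnn l; linarith
        have hlle : Metric.diam (Set.univ : Set (X l)) ≤ ((⌈b⌉₊ : ℕ) : ℝ) := by
          have := hdnn k; linarith
        have hpA := hkmem ⌈b⌉₊ k hkle x
        have hqA := hkmem ⌈b⌉₊ l hlle y
        have hmem : ((⟨k, x⟩ : Σ k, X k), (⟨l, y⟩ : Σ k, X k)) ∈ (A ⌈b⌉₊) ×ˢ (A ⌈b⌉₊) :=
          Finset.mem_product.2 ⟨hpA, hqA⟩
        have hsu := Finset.le_sup
          (f := fun pq : (Σ k, X k) × (Σ k, X k) => ⌈D pq.1 pq.2⌉₊) hmem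
        have hDle : D ⟨k, x⟩ ⟨l, y⟩ ≤ ((Bsup ⌈b⌉₊ : ℕ) : ℝ) :=
          le_trans (Nat.le_ceil _) (by exact_mod_cast hsu)
        have h2 : ((Bsup ⌈b⌉₊ : ℕ) : ℝ) ≤ max b ((Bsup ⌈b⌉₊ : ℕ) : ℝ) := le_max_right _ _
        linarith
  · intro p q
    constructor
    · -- lower bound
      apply csInf_le
      · refine ⟨0, ?_⟩
        intro x hx
        rw [Set.mem_insert_iff] at hx
        rcases hx with rfl | ⟨p', q', _, rfl⟩
        · exact hD0 p q
        · exact hD'0 p' q'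
      · exact Set.mem_insert_iff.2 (Or.inr ⟨p, q, le_refl _, rfl⟩)
    · -- upper bound
      obtain ⟨k, x⟩ := p
      obtain ⟨l, y⟩ := q
      rcases eq_or_ne k l with rfl | hkl
      · have heq : D' ⟨k, x⟩ ⟨k, y⟩ = D ⟨k, x⟩ ⟨k, y⟩ := by rw [hres, hres']
        rw [heq]
        exact le_max_left _ _
      · set n := ⌈D ⟨k, x⟩ ⟨l, y⟩⌉₊ with hn
        have hDn : D ⟨k, x⟩ ⟨l, y⟩ ≤ (n : ℝ) := Nat.le_ceil _
        have hs := hsep k l hkl x y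
        have hkle : Metric.diam (Set.univ : Set (X k)) ≤ (n : ℝ) := by
          have := hdnn l; linarith
        have hlle : Metric.diam (Set.univ : Set (X l)) ≤ (n : ℝ) := by
          have := hdnn k; linarith
        have hpA := hkmem n k hkle x
        have hqA := hkmem n l hlle y
        have hmem : ((⟨k, x⟩ : Σ k, X k), (⟨l, y⟩ : Σ k, X k)) ∈ (A n) ×ˢ (A n) :=
          Finset.mem_product.2 ⟨hpA, hqA⟩
        have hsu := Finset.le_sup
          (f := fun pq : (Σ k, X k) × (Σ k, X k) => ⌈D' pq.1 pq.2⌉₊) hmem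
        have : D' ⟨k, x⟩ ⟨l, y⟩ ≤ ((Msup n : ℕ) : ℝ) :=
          le_trans (Nat.le_ceil _) (by exact_mod_cast hsu)
        exact le_trans this (le_max_right _ _)
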